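/- Let k ⊆ L be a field extension, R a k-algebra, and M a k-subspace of R. If L ⊗_k M is a Mathieu subspace of the L-algebra L ⊗_k R, then M is a Mathieu subspace of the k-algebra R. -/

import Mathlib

def IsMathieu (k : Type*) {R : Type*} [Field k] [CommRing R] [Algebra k R]
    (M : Submodule k R) : Prop :=
  ∀ a : R, (∀ m : ℕ, 1 ≤ m → a ^ m ∈ M) →
    ∀ b : R, ∃ N : ℕ, ∀ m : ℕ, N ≤ m → b * a ^ m ∈ M

theorem exists_proj_one (k L : Type*) [Field k] [Field L] [Algebra k L] :
    ∃ proj : L →ₗ[k] k, proj 1 = 1 := by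
  obtain ⟨q, hq⟩ := Submodule.exists_isCompl (k ∙ (1 : L))
  let e : k ≃ₗ[k] (k ∙ (1 : L)) :=
    LinearEquiv.toSpanNonzeroSingleton k L 1 one_ne_zero
  refine ⟨e.symm.toLinearMap ∘ₗ ((k ∙ (1 : L)).linearProjOfIsCompl q hq), ?_⟩
  have h1 : (1 : L) ∈ k ∙ (1 : L) := Submodule.mem_span_singleton_self 1
  have : (k ∙ (1 : L)).linearProjOfIsCompl q hq 1 = ⟨1, h1⟩ :=
    Submodule.linearProjOfIsCompl_apply_left hq ⟨1, h1⟩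
  simp only [LinearMap.coe_comp, Function.comp_apply, this]
  have := LinearEquiv.toSpanNonzeroSingleton_one k L (1 : L) one_ne_zero
  rw [← this]
  exact e.symm_apply_apply 1

theorem mem_of_tmul_mem (k L R : Type*) [Field k] [Field L] [Algebra k L]
    [CommRing R] [Algebra k R] (M : Submodule k R) {r : R}
    (hr : (1 : L) ⊗ₜ[k] r ∈ M.baseChange L) : r ∈ M := by
  obtain ⟨proj, hproj⟩ := exists_proj_one k L
  let f : TensorProduct k L R →ₗ[k] R :=
    TensorProduct.lift
      { toFun := fun l => proj l • (LinearMap.id : R →ₗ[k] R)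
        map_add' := by intro x y; simp [add_smul]
        map_smul' := by intro c x; simp [mul_smul] }
  have key : ∀ x ∈ M.baseChange L, ∀ l : L, f (l • x) ∈ M := by
    intro x hx
    rw [Submodule.baseChange_eq_span] at hx
    refine Submodule.span_induction ?_ ?_ ?_ ?_ hx
    · rintro y ⟨m, hm, rfl⟩ l
      have : l • (TensorProduct.mk k L R 1 m) = l ⊗ₜ[k] m := by
        simp [TensorProduct.mk, TensorProduct.smul_tmul']
      rw [this]
      have : f (l ⊗ₜ[k] m) = proj l • m := rfl
      rw [this]
      exact M.smul_mem _ hm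
    · intro l; simp
    · intro x y _ _ hx hy l
      rw [smul_add, map_add]
      exact M.add_mem (hx l) (hy l)
    · intro c x _ hx l
      rw [smul_smul]
      exact hx (l * c)
  have := key _ hr 1
  rw [one_smul] at this
  have hf : f ((1 : L) ⊗ₜ[k] r) = r := by
    show proj 1 • r = r
    rw [hproj, one_smul]
  rwa [hf] at this

/-- If `L ⊗_k M` is a Mathieu subspace of `L ⊗_k R`, then `M` is a Mathieu subspace
of `R`. Here `L ⊗_k M` is realized as `M.baseChange L`, the `L`-subspace of
`L ⊗[k] R` spanned by the elements `1 ⊗ m`, `m ∈ M`. -/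
theorem isMathieu_of_baseChange (k L R : Type*) [Field k] [Field L] [Algebra k L]
    [CommRing R] [Algebra k R] (M : Submodule k R)
    (h : IsMathieu L (M.baseChange L : Submodule L (TensorProduct k L R))) :
    IsMathieu k M := by
  intro a ha b
  have hpow : ∀ m : ℕ, ((1 : L) ⊗ₜ[k] a) ^ m = (1 : L) ⊗ₜ[k] (a ^ m) := by
    intro m
    have : (1 : L) ⊗ₜ[k] a = Algebra.TensorProduct.includeRight a := rfl
    rw [this, ← map_pow]
    rfl
  obtain ⟨N, hN⟩ := h ((1 : L) ⊗ₜ[k] a)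
    (fun m hm => by
      rw [hpow]
      exact Submodule.tmul_mem_baseChange_of_mem 1 (ha m hm))
    ((1 : L) ⊗ₜ[k] b)
  refine ⟨N, fun m hm => ?_⟩
  have := hN m hm
  rw [hpow] at this
  have heq : ((1 : L) ⊗ₜ[k] b) * ((1 : L) ⊗ₜ[k] (a ^ m)) = (1 : L) ⊗ₜ[k] (b * a ^ m) := by
    rw [Algebra.TensorProduct.tmul_mul_tmul, one_mul]
  rw [heq] at this
  exact mem_of_tmul_mem k L R M this
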